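/- Let K ⊂ ℂ be compact, z ∈ K, and suppose there is a closed disk D_R of radius R > 0 with z on its boundary circle and K ⊆ D_R. Then for every polynomial p of degree n ≥ 1 all of whose roots lie in K, |p'(z)| ≥ (n / (2R)) · |p(z)|. -/

import Mathlib

open Polynomial Metric

/-- Pointwise bound: if `w` lies in the closed disk of radius `R` around `c`
and `z` is on the boundary circle, then `Re((z-c)/R · (z-w)⁻¹) ≥ 1/(2R)`. -/
lemma turan_key (c z w : ℂ) (R : ℝ) (hR : 0 < R)
    (hzc : ‖z - c‖ = R) (hw : ‖w - c‖ ≤ R) (hzw : z ≠ w) :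
    1 / (2 * R) ≤ ((z - c) / (R : ℂ) * (z - w)⁻¹).re := by
  have hu : z - w ≠ 0 := sub_ne_zero.mpr hzw
  have hnsq : 0 < Complex.normSq (z - w) := Complex.normSq_pos.mpr hu
  -- 2 Re((z-c) conj(z-w)) = |z-c|² + |z-w|² - |w-c|²
  have hpol : 2 * ((z - c) * (starRingEnd ℂ) (z - w)).re
      = Complex.normSq (z - c) + Complex.normSq (z - w) - Complex.normSq (w - c) := by
    have := Complex.normSq_sub (z - c) (z - w)
    have h2 : (z - c) - (z - w) = w - c := by ring
    rw [h2] at this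
    linarith
  have hA : Complex.normSq (z - c) = R ^ 2 := by
    rw [← Complex.sq_norm, hzc]
  have hB : Complex.normSq (w - c) ≤ R ^ 2 := by
    rw [← Complex.sq_norm]
    exact pow_le_pow_left₀ (norm_nonneg _) hw 2
  have hre : Complex.normSq (z - w) / 2 ≤ ((z - c) * (starRingEnd ℂ) (z - w)).re := by
    nlinarith
  -- rewrite the expression
  have hexpr : ((z - c) / (R : ℂ) * (z - w)⁻¹).re
      = ((z - c) * (starRingEnd ℂ) (z - w)).re / (R * Complex.normSq (z - w)) := by
    rw [Complex.inv_def, div_eq_mul_inv]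
    have : (z - c) * (R : ℂ)⁻¹ * ((starRingEnd ℂ) (z - w) * (((Complex.normSq (z - w))⁻¹ : ℝ) : ℂ))
        = (z - c) * (starRingEnd ℂ) (z - w) * ((((R * Complex.normSq (z - w))⁻¹ : ℝ)) : ℂ) := by
      push_cast
      field_simp
    rw [this, mul_comm ((z - c) * (starRingEnd ℂ) (z - w)), Complex.re_ofReal_mul,
      mul_comm, div_eq_mul_inv]
  rw [hexpr]
  rw [div_le_div_iff₀ (by positivity) (by positivity)]
  calc 1 * (R * Complex.normSq (z - w)) = (Complex.normSq (z - w) / 2) * (2 * R) := by ring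
    _ ≤ ((z - c) * (starRingEnd ℂ) (z - w)).re * (2 * R) := by
        apply mul_le_mul_of_nonneg_right hre (by positivity)

/-- Turán / Levenberg–Poletsky pointwise lemma: if `z ∈ K` lies on the boundary
circle of a closed disk of radius `R` containing `K`, then
`|p'(z)| ≥ (n/(2R)) |p(z)|` for every degree-`n` polynomial with all roots in `K`. -/
theorem turan_pointwise (K : Set ℂ) (hK : IsCompact K) (z : ℂ) (hz : z ∈ K)
    (c : ℂ) (R : ℝ) (hR : 0 < R) (hzc : dist z c = R) (hKD : K ⊆ closedBall c R)
    (n : ℕ) (hn : 1 ≤ n) (p : Polynomial ℂ) (hdeg : p.natDegree = n)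
    (hroots : ∀ w : ℂ, p.IsRoot w → w ∈ K) :
    ((n : ℝ) / (2 * R)) * ‖p.eval z‖
      ≤ ‖(Polynomial.derivative p).eval z‖ := by
  have hp0 : p ≠ 0 := fun h => by simp [h] at hdeg; omega
  by_cases hpz : p.eval z = 0
  · rw [hpz]
    simp only [norm_zero, mul_zero]
    exact norm_nonneg _
  -- z is not a root; every root is in the closed ball and ≠ z
  have hzc' : ‖z - c‖ = R := by
    rwa [Complex.dist_eq] at hzc
  have hroot_mem : ∀ w ∈ p.roots, ‖w - c‖ ≤ R ∧ z ≠ w := by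
    intro w hw
    have hwroot : p.IsRoot w := (Polynomial.mem_roots hp0).mp hw
    have hwK := hroots w hwroot
    refine ⟨?_, ?_⟩
    · have := hKD hwK
      rwa [Metric.mem_closedBall, Complex.dist_eq] at this
    · rintro rfl
      exact hpz hwroot
  -- splitting
  have hsplit : p = Polynomial.C p.leadingCoeff *
      (p.roots.map fun a => Polynomial.X - Polynomial.C a).prod :=
    (IsAlgClosed.splits p).eq_prod_roots
  have hcard : p.roots.card = n := by
    rw [← hdeg]
    exact Polynomial.splits_iff_card_roots.mp (IsAlgClosed.splits p)
  set M : Polynomial ℂ := (p.roots.map fun a => Polynomial.X - Polynomial.C a).prod with hM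
  have hMz : M.eval z = (p.roots.map fun a => z - a).prod := by
    simp [hM, Polynomial.eval_multiset_prod, Multiset.map_map, Function.comp]
  have hMzne : M.eval z ≠ 0 := by
    intro h
    apply hpz
    rw [hsplit]
    simp [h]
  have hlc : p.leadingCoeff ≠ 0 := Polynomial.leadingCoeff_ne_zero.mpr hp0
  -- s = p'(z)/p(z) = Σ (z-w)⁻¹
  have hderiv : (Polynomial.derivative p).eval z / p.eval z
      = (p.roots.map fun w => (z - w)⁻¹).sum := by
    have hd : Polynomial.derivative p = Polynomial.C p.leadingCoeff * Polynomial.derivative M := by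
      nth_rw 1 [hsplit]
      rw [Polynomial.derivative_mul, Polynomial.derivative_C]
      ring
    have hpz' : p.eval z = p.leadingCoeff * M.eval z := by
      conv_lhs => rw [hsplit]
      simp
    have hdz : (Polynomial.derivative p).eval z = p.leadingCoeff * (Polynomial.derivative M).eval z := by
      rw [hd]; simp
    rw [hpz', hdz, mul_div_mul_left _ _ hlc]
    -- derivative of multiset product
    classical
    rw [hM, Polynomial.derivative_prod]
    rw [← Polynomial.coe_evalRingHom, map_multiset_sum, Multiset.map_map, Polynomial.coe_evalRingHom]
    rw [div_eq_iff hMzne, ← Multiset.sum_map_mul_right]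
    congr 1
    apply Multiset.map_congr rfl
    intro w hw
    simp only [Function.comp_apply, Polynomial.eval_mul, Polynomial.derivative_sub,
      Polynomial.derivative_X, Polynomial.derivative_C, sub_zero, Polynomial.eval_one, mul_one]
    have hzw : z - w ≠ 0 := sub_ne_zero.mpr (hroot_mem w hw).2
    have hMsplit : M.eval z = (z - w) *
        ((p.roots.erase w).map fun a => Polynomial.X - Polynomial.C a).prod.eval z := by
      rw [hM]
      nth_rw 1 [← Multiset.cons_erase hw]
      simp [Polynomial.eval_multiset_prod]
    rw [hMsplit]
    field_simp
  -- lower bound for Re of a * s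
  set s : ℂ := (Polynomial.derivative p).eval z / p.eval z with hs
  set a : ℂ := (z - c) / (R : ℂ) with ha
  have habs_a : ‖a‖ = 1 := by
    rw [ha, norm_div, hzc', Complex.norm_real, Real.norm_eq_abs, abs_of_pos hR, div_self (ne_of_gt hR)]
  have hre_sum : (n : ℝ) / (2 * R) ≤ (a * s).re := by
    rw [hderiv, ← Multiset.sum_map_mul_left]
    rw [← Complex.coe_reAddGroupHom, AddMonoidHom.map_multiset_sum, Multiset.map_map]
    have hcard' : (p.roots.map
        (Complex.reAddGroupHom ∘ fun w => a * (z - w)⁻¹)).card = n := by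
      rw [Multiset.card_map, hcard]
    have hsum := Multiset.card_nsmul_le_sum (s := p.roots.map
        (Complex.reAddGroupHom ∘ fun w => a * (z - w)⁻¹)) (a := 1 / (2 * R)) ?_
    · rw [hcard'] at hsum
      calc (n : ℝ) / (2 * R) = n • (1 / (2 * R)) := by
            simp [nsmul_eq_mul]; ring
        _ ≤ _ := hsum
    · intro x hx
      obtain ⟨w, hw, rfl⟩ := Multiset.mem_map.mp hx
      obtain ⟨hw1, hw2⟩ := hroot_mem w hw
      exact turan_key c z w R hR hzc' hw1 hw2
  have h1 : (n : ℝ) / (2 * R) ≤ ‖s‖ := by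
    refine le_trans hre_sum (le_trans (Complex.re_le_norm _) ?_)
    rw [norm_mul, habs_a, one_mul]
  have hpzpos : 0 < ‖p.eval z‖ := norm_pos_iff.mpr hpz
  rw [hs, norm_div] at h1
  exact (le_div_iff₀ hpzpos).mp h1
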